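/- Let a, b, c, d, e, f be positive integers. If g_a·g_b·g_c + g_a·g_b·g_d = g_c·g_e·g_f + g_d·g_e·g_f in ℚ⟦X⟧, then {a, b} = {e, f} as multisets. -/

import Mathlib

/-- `g w = 1 + 2 ∑_{j ≥ 1} X^{jw}` in `ℚ⟦X⟧`. -/
noncomputable def g (w : ℕ) : PowerSeries ℚ :=
  PowerSeries.mk fun n => if n = 0 then 1 else if w ∣ n then 2 else 0

lemma coeff_g (w n : ℕ) :
    PowerSeries.coeff n (g w) = if n = 0 then 1 else if w ∣ n then 2 else 0 :=
  PowerSeries.coeff_mk _ _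

lemma coeff_g_nonneg (w n : ℕ) : 0 ≤ PowerSeries.coeff n (g w) := by
  rw [coeff_g]; split_ifs <;> norm_num

lemma g_ne_zero (w : ℕ) : g w ≠ 0 := by
  intro h
  have := coeff_g w 0
  rw [h] at this
  simp at this

lemma gsum_ne_zero (c d : ℕ) : g c + g d ≠ 0 := by
  intro h
  have h0 : PowerSeries.coeff 0 (g c + g d) = 2 := by
    rw [map_add, coeff_g, coeff_g]; norm_num
  rw [h] at h0
  simp at h0

lemma g_inj {b f : ℕ} (hb : 0 < b) (hf : 0 < f) (h : g b = g f) : b = f := by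
  have h1 : PowerSeries.coeff b (g b) = PowerSeries.coeff b (g f) := by rw [h]
  have h2 : PowerSeries.coeff f (g b) = PowerSeries.coeff f (g f) := by rw [h]
  rw [coeff_g, coeff_g] at h1 h2
  have hb0 : b ≠ 0 := hb.ne'
  have hf0 : f ≠ 0 := hf.ne'
  simp only [hb0, hf0, if_false, dvd_refl, if_true] at h1 h2
  have hfb : f ∣ b := by by_contra hh; rw [if_neg hh] at h1; norm_num at h1
  have hbf : b ∣ f := by by_contra hh; rw [if_neg hh] at h2; norm_num at h2
  exact Nat.dvd_antisymm hbf hfb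

lemma low_coeff {a b n : ℕ} (hab : a ≤ b) (h1 : 1 ≤ n) (hn : n < a) :
    PowerSeries.coeff n (g a * g b) = 0 := by
  rw [PowerSeries.coeff_mul]
  apply Finset.sum_eq_zero
  rintro ⟨i, j⟩ hij
  rw [Finset.HasAntidiagonal.mem_antidiagonal] at hij
  simp only [coeff_g]
  rcases Nat.eq_zero_or_pos i with hi | hi
  · -- i = 0, j = n, need b ∤ n
    subst hi
    simp only [zero_add] at hij
    subst hij
    have hj0 : j ≠ 0 := by omega
    have : ¬ b ∣ j := fun hd => absurd (Nat.le_of_dvd (by omega) hd) (by omega)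
    simp [hj0, this]
  · have hi0 : i ≠ 0 := hi.ne'
    have : ¬ a ∣ i := fun hd => absurd (Nat.le_of_dvd hi hd) (by omega)
    simp [hi0, this]

lemma coeff_min_pos {a : ℕ} (b : ℕ) (ha : 0 < a) :
    0 < PowerSeries.coeff a (g a * g b) := by
  rw [PowerSeries.coeff_mul]
  apply Finset.sum_pos'
  · intro p _; exact mul_nonneg (coeff_g_nonneg _ _) (coeff_g_nonneg _ _)
  · refine ⟨(a, 0), ?_, ?_⟩
    · rw [Finset.HasAntidiagonal.mem_antidiagonal]; simp
    · simp only [coeff_g, ha.ne', if_false, dvd_refl, if_true]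
      norm_num

lemma main_ordered {a b e f : ℕ} (ha : 0 < a) (hb : 0 < b) (he : 0 < e) (hf : 0 < f)
    (hab : a ≤ b) (hef : e ≤ f) (h : g a * g b = g e * g f) : a = e ∧ b = f := by
  have hae : a = e := by
    by_contra hne
    rcases Nat.lt_or_ge a e with hlt | hge
    · have h1 : PowerSeries.coeff a (g e * g f) = 0 := low_coeff hef ha hlt
      have h2 := coeff_min_pos b ha
      rw [h] at h2
      rw [h1] at h2; exact lt_irrefl _ h2
    · have hlt : e < a := lt_of_le_of_ne hge (Ne.symm hne)
      have h1 : PowerSeries.coeff e (g a * g b) = 0 := low_coeff hab he (by omega)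
      have h2 := coeff_min_pos f he
      rw [← h] at h2
      rw [h1] at h2; exact lt_irrefl _ h2
  subst hae
  have hbf : g b = g f := by
    have := mul_left_cancel₀ (g_ne_zero a) h
    exact this
  exact ⟨rfl, g_inj hb hf hbf⟩

theorem stmt_6 (a b c d e f : ℕ) (ha : 0 < a) (hb : 0 < b) (hc : 0 < c)
    (hd : 0 < d) (he : 0 < e) (hf : 0 < f)
    (h : g a * g b * g c + g a * g b * g d = g c * g e * g f + g d * g e * g f) :
    ({a, b} : Multiset ℕ) = {e, f} := by
  have hcancel : g a * g b = g e * g f := by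
    have h' : (g c + g d) * (g a * g b) = (g c + g d) * (g e * g f) := by ring_nf; ring_nf at h; linear_combination h
    exact mul_left_cancel₀ (gsum_ne_zero c d) h'
  rcases Nat.le_total a b with hab | hab <;> rcases Nat.le_total e f with hef | hef
  · obtain ⟨h1, h2⟩ := main_ordered ha hb he hf hab hef hcancel
    rw [h1, h2]
  · obtain ⟨h1, h2⟩ := main_ordered ha hb hf he hab hef (by linear_combination hcancel)
    rw [h1, h2]
    exact Multiset.pair_comm f e
  · obtain ⟨h1, h2⟩ := main_ordered hb ha he hf hab hef (by linear_combination hcancel)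
    rw [h1, h2]
    exact Multiset.pair_comm f e
  · obtain ⟨h1, h2⟩ := main_ordered hb ha hf he hab hef (by linear_combination hcancel)
    rw [h1, h2]
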